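/- arXiv:1205.6367 — 3 statements merged into one kernel-verified Lean document; each statement's English description precedes it below -/
import Mathlib

section
/- (Property (2.12): Krylov characterization of the PLS basis.) Assume K is injective, and that K(b), K²(b), …, K^p(b) are linearly independent. Suppose ψ_1, …, ψ_{p−1} ∈ H satisfy span{ψ_1, …, ψ_{p−1}} = span{K(b), …, K^{p−1}(b)}. Then there exists ψ_p ∈ span{K(b), …, K^p(b)} with ⟨ψ_j, K ψ_p⟩ = 0 for j = 1, …, p−1 and ⟨ψ_p, K ψ_p⟩ = 1, this ψ_p is unique up to a sign change, and span{ψ_1, …, ψ_{p−1}, ψ_p} = span{K(b), …, K^p(b)}. -/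
open scoped RealInnerProductSpace

section Aux

variable {H : Type*} [NormedAddCommGroup H] [InnerProductSpace ℝ H] [CompleteSpace H]

private lemma kdef (K : H →L[ℝ] H) (hK_sa : IsSelfAdjoint K)
    (hK_pos : ∀ x : H, 0 ≤ ⟪K x, x⟫) (hK_inj : Function.Injective K)
    (x : H) (hx : ⟪x, K x⟫ = 0) : x = 0 := by
  have hsym : ∀ u v : H, ⟪K u, v⟫ = ⟪u, K v⟫ := fun u v =>
    (ContinuousLinearMap.isSelfAdjoint_iff_isSymmetric.mp hK_sa) u v
  have hKx : K x = 0 := by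
    by_contra h
    have ha : (0:ℝ) < ⟪K x, K x⟫ := by
      rw [real_inner_self_eq_norm_sq]
      have : 0 < ‖K x‖ := norm_pos_iff.mpr h
      positivity
    set a : ℝ := ⟪K x, K x⟫ with haa
    set c : ℝ := ⟪K (K x), K x⟫ with hcc
    have hc0 : 0 ≤ c := by
      have := hK_pos (K x)
      simpa [hcc] using this
    have hc1 : (0:ℝ) < c + 1 := by linarith
    set t : ℝ := a / (c + 1) with htt
    have ht0 : 0 < t := div_pos ha hc1
    have htc : t * (c + 1) = a := div_mul_cancel₀ a (ne_of_gt hc1)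
    have hexp := hK_pos (x - t • K x)
    have hexp' : 0 ≤ -(2 * t * a) + t ^ 2 * c := by
      have e1 : ⟪K (x - t • K x), x - t • K x⟫ =
          ⟪K x, x⟫ - t * ⟪K x, K x⟫ - t * ⟪K (K x), x⟫ + t ^ 2 * ⟪K (K x), K x⟫ := by
        simp only [map_sub, map_smul, inner_sub_left, inner_sub_right,
          inner_smul_left, inner_smul_right, ContinuousLinearMap.coe_smul',
          Pi.smul_apply, smul_eq_mul, RCLike.conj_to_real]
        ring
      have e2 : ⟪K x, x⟫ = 0 := by rw [real_inner_comm]; exact hx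
      have e3 : ⟪K (K x), x⟫ = a := by rw [hsym]
      calc (0:ℝ) ≤ ⟪K (x - t • K x), x - t • K x⟫ := hexp
        _ = -(2 * t * a) + t ^ 2 * c := by rw [e1, e2, e3, ← haa, ← hcc]; ring
    nlinarith [mul_pos ht0 ha, sq_nonneg t, mul_pos ht0 ht0]
  have : K x = K 0 := by simpa using hKx
  exact hK_inj this

/-- Type synonym for `H` carrying the inner product `⟪u, K v⟫`. -/
def KSp (K : H →L[ℝ] H) : Type _ := H

instance (K : H →L[ℝ] H) : AddCommGroup (KSp K) := inferInstanceAs (AddCommGroup H)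
instance (K : H →L[ℝ] H) : Module ℝ (KSp K) := inferInstanceAs (Module ℝ H)

/-- Identity linear equivalence between `H` and the synonym. -/
def toKSp (K : H →L[ℝ] H) : H ≃ₗ[ℝ] KSp K := LinearEquiv.refl ℝ H

noncomputable def KCore (K : H →L[ℝ] H) (hK_sa : IsSelfAdjoint K)
    (hK_pos : ∀ x : H, 0 ≤ ⟪K x, x⟫) (hK_inj : Function.Injective K) :
    InnerProductSpace.Core ℝ (KSp K) where
  inner u v := ⟪((toKSp K).symm u), K ((toKSp K).symm v)⟫
  conj_inner_symm u v := by
    have hsym : ∀ a b : H, ⟪K a, b⟫ = ⟪a, K b⟫ := fun a b =>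
      (ContinuousLinearMap.isSelfAdjoint_iff_isSymmetric.mp hK_sa) a b
    simp only [RCLike.conj_to_real]
    rw [← hsym, real_inner_comm]
  re_inner_nonneg u := by
    have := hK_pos ((toKSp K).symm u)
    simpa [real_inner_comm] using this
  add_left u v w := by simp [inner_add_left]
  smul_left u v r := by simp [inner_smul_left]
  definite u h := by
    have : (toKSp K).symm u = 0 := kdef K hK_sa hK_pos hK_inj _ h
    simpa using congrArg (toKSp K) this

end Aux

/-- (Property (2.12): Krylov characterization of the PLS basis.)
`K` is a positive semidefinite, self-adjoint, injective (compact/trace-class) operator on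
a real Hilbert space `H` and `b ∈ H`.  Writing `p = m + 1`, assume `K b, …, K^p b` are
linearly independent and that `ψ 0, …, ψ (m-1)` span the same subspace as
`K b, …, K^{p-1} b`.  Then there exists `ψp` in the span of `K b, …, K^p b` with
`⟪ψ j, K ψp⟫ = 0` for all `j` and `⟪ψp, K ψp⟫ = 1`; it is unique up to sign, and
adjoining it yields the span of `K b, …, K^p b`. -/
theorem stmt_2
    {H : Type*} [NormedAddCommGroup H] [InnerProductSpace ℝ H] [CompleteSpace H]
    (K : H →L[ℝ] H) (hK_sa : IsSelfAdjoint K) (hK_pos : ∀ x : H, 0 ≤ ⟪K x, x⟫)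
    (hK_inj : Function.Injective K)
    (b : H) (m : ℕ) (ψ : Fin m → H)
    (hLI : LinearIndependent ℝ fun j : Fin (m + 1) => (K ^ ((j : ℕ) + 1)) b)
    (hspan : Submodule.span ℝ (Set.range ψ) =
      Submodule.span ℝ (Set.range fun j : Fin m => (K ^ ((j : ℕ) + 1)) b)) :
    ∃ ψp ∈ Submodule.span ℝ (Set.range fun j : Fin (m + 1) => (K ^ ((j : ℕ) + 1)) b),
      (∀ j : Fin m, ⟪ψ j, K ψp⟫ = 0) ∧
      ⟪ψp, K ψp⟫ = 1 ∧
      Submodule.span ℝ (insert ψp (Set.range ψ)) =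
        Submodule.span ℝ (Set.range fun j : Fin (m + 1) => (K ^ ((j : ℕ) + 1)) b) ∧
      ∀ ψp' ∈ Submodule.span ℝ (Set.range fun j : Fin (m + 1) => (K ^ ((j : ℕ) + 1)) b),
        (∀ j : Fin m, ⟪ψ j, K ψp'⟫ = 0) → ⟪ψp', K ψp'⟫ = 1 →
          ψp' = ψp ∨ ψp' = -ψp := by
  classical
  letI : NormedAddCommGroup (KSp K) := (KCore K hK_sa hK_pos hK_inj).toNormedAddCommGroup
  letI : InnerProductSpace ℝ (KSp K) := InnerProductSpace.ofCore _
  set e : H ≃ₗ[ℝ] KSp K := toKSp K with he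
  have hinner : ∀ u v : H, (inner ℝ (e u) (e v) : ℝ) = ⟪u, K v⟫ := fun u v => rfl
  set f : Fin (m+1) → H := fun j => (K ^ ((j:ℕ)+1)) b with hf
  set W : Submodule ℝ H := Submodule.span ℝ (Set.range ψ) with hW
  set V : Submodule ℝ H := Submodule.span ℝ (Set.range f) with hV
  -- the Fin m family in terms of f
  have hfm : (fun j : Fin m => (K ^ ((j:ℕ)+1)) b) = fun j : Fin m => f j.castSucc := rfl
  have hWV : W ≤ V := by
    rw [hspan, hfm]
    refine Submodule.span_le.mpr ?_
    rintro x ⟨j, rfl⟩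
    exact Submodule.subset_span ⟨j.castSucc, rfl⟩
  set Wk : Submodule ℝ (KSp K) := Submodule.map (e : H →ₗ[ℝ] KSp K) W with hWk
  set Vk : Submodule ℝ (KSp K) := Submodule.map (e : H →ₗ[ℝ] KSp K) V with hVk
  have hWkVk : Wk ≤ Vk := Submodule.map_mono hWV
  haveI : FiniteDimensional ℝ W := FiniteDimensional.span_of_finite ℝ (Set.finite_range _)
  haveI : FiniteDimensional ℝ V := FiniteDimensional.span_of_finite ℝ (Set.finite_range _)
  haveI : FiniteDimensional ℝ Wk := Module.Finite.map W (e : H →ₗ[ℝ] KSp K)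
  haveI : CompleteSpace Wk := FiniteDimensional.complete ℝ Wk
  -- the projection construction
  set u : KSp K := e (f (Fin.last m)) with hu
  have huVk : u ∈ Vk := ⟨f (Fin.last m), Submodule.subset_span ⟨Fin.last m, rfl⟩, rfl⟩
  set v : KSp K := u - (Wk.orthogonalProjectionOnto u : KSp K) with hv
  have hvorth : v ∈ Wkᗮ := Wk.sub_starProjection_mem_orthogonal u
  have hvVk : v ∈ Vk := Vk.sub_mem huVk (hWkVk (Wk.orthogonalProjectionOnto u).2)
  -- last Krylov vector is not in W
  have hlast : f (Fin.last m) ∉ W := by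
    rw [hspan, hfm]
    intro hmem
    have hsub : Set.range (fun j : Fin m => f j.castSucc) = f '' {i : Fin (m+1) | (i:ℕ) < m} := by
      rw [← Fin.range_castSucc, ← Set.range_comp]; rfl
    rw [hsub] at hmem
    exact hLI.notMem_span_image (by simp) hmem
  have hv0 : v ≠ 0 := by
    intro h0
    apply hlast
    have : u ∈ Wk := by
      have : u = (Wk.orthogonalProjectionOnto u : KSp K) := by
        rw [← sub_eq_zero]; exact h0
      rw [this]; exact (Wk.orthogonalProjectionOnto u).2
    rcases this with ⟨x, hxW, hxe⟩
    have : x = f (Fin.last m) := e.injective hxe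
    rwa [← this]
  set vh : H := e.symm v with hvh
  have hev : e vh = v := e.apply_symm_apply v
  have hvh0 : vh ≠ 0 := fun h => hv0 (by rw [← hev, h, map_zero])
  have hvhV : vh ∈ V := by
    rcases hvVk with ⟨x, hxV, hxe⟩
    have : x = vh := by rw [hvh, ← hxe]; exact (e.symm_apply_apply x).symm
    rwa [← this]
  -- positivity
  have hposd : (0:ℝ) < ⟪vh, K vh⟫ := by
    rcases lt_or_eq_of_le (by simpa [real_inner_comm] using hK_pos vh) with h | h
    · exact h
    · exact absurd (kdef K hK_sa hK_pos hK_inj vh h.symm) hvh0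
  set r : ℝ := Real.sqrt ⟪vh, K vh⟫ with hr
  have hrpos : 0 < r := Real.sqrt_pos.mpr hposd
  set ψp : H := r⁻¹ • vh with hψp
  have hψpV : ψp ∈ V := V.smul_mem _ hvhV
  -- orthogonality of ψp against all of W (via Wkᗮ)
  have horthW : ∀ w ∈ W, ⟪w, K ψp⟫ = 0 := by
    intro w hw
    have h1 : ⟪w, K vh⟫ = 0 := by
      rw [← hinner w vh, hev]
      exact (Submodule.mem_orthogonal Wk v).mp hvorth (e w) ⟨w, hw, rfl⟩
    rw [hψp, map_smul]
    simp [inner_smul_right, h1]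
  have hψrange : ∀ j : Fin m, ψ j ∈ W := fun j => Submodule.subset_span ⟨j, rfl⟩
  have hnorm : ⟪ψp, K ψp⟫ = 1 := by
    have hrr : r * r = ⟪vh, K vh⟫ := Real.mul_self_sqrt (le_of_lt hposd)
    have hr0 : r ≠ 0 := ne_of_gt hrpos
    rw [hψp, map_smul, inner_smul_left, inner_smul_right]
    simp only [RCLike.conj_to_real]
    rw [← hrr]
    field_simp
  -- ψp not in W
  have hψpnW : ψp ∉ W := by
    intro hmem
    have hvhW : vh ∈ W := by
      have : r • ψp = vh := by
        rw [hψp, smul_smul, mul_inv_cancel₀ (ne_of_gt hrpos), one_smul]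
      rw [← this]; exact W.smul_mem _ hmem
    have : (inner ℝ v v : ℝ) = 0 :=
      (Submodule.mem_orthogonal Wk v).mp hvorth v ⟨vh, hvhW, hev⟩
    exact hv0 (inner_self_eq_zero.mp this)
  -- span equality
  have hspan2 : Submodule.span ℝ (insert ψp (Set.range ψ)) = V := by
    have hle : Submodule.span ℝ (insert ψp (Set.range ψ)) ≤ V := by
      refine Submodule.span_le.mpr ?_
      rintro x (rfl | hx)
      · exact hψpV
      · exact hWV (Submodule.subset_span hx)
    have hWlt : W < Submodule.span ℝ (insert ψp (Set.range ψ)) := by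
      refine lt_of_le_of_ne (Submodule.span_mono (Set.subset_insert _ _)) ?_
      intro hEq
      exact hψpnW (hEq ▸ Submodule.subset_span (Set.mem_insert _ _))
    haveI : FiniteDimensional ℝ (Submodule.span ℝ (insert ψp (Set.range ψ))) :=
      FiniteDimensional.span_of_finite ℝ ((Set.finite_range ψ).insert ψp)
    have hfinW : Module.finrank ℝ W = m := by
      rw [hspan, hfm]
      have hli' : LinearIndependent ℝ (fun j : Fin m => f j.castSucc) :=
        hLI.comp Fin.castSucc (Fin.castSucc_injective m)
      rw [finrank_span_eq_card hli']
      simp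
    have hfinV : Module.finrank ℝ V = m + 1 := by
      rw [hV, finrank_span_eq_card hLI]
      simp
    have h1 : m < Module.finrank ℝ (Submodule.span ℝ (insert ψp (Set.range ψ))) := by
      have h2 := Submodule.finrank_lt_finrank_of_lt hWlt
      rwa [hfinW] at h2
    exact Submodule.eq_of_le_of_finrank_le hle (by omega)
  refine ⟨ψp, hψpV, fun j => horthW _ (hψrange j), hnorm, hspan2, ?_⟩
  -- uniqueness up to sign
  intro q hqV hqorth hqnorm
  -- q is B-orthogonal to all of W
  have hqW : ∀ w ∈ W, ⟪w, K q⟫ = 0 := by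
    intro w hw
    induction hw using Submodule.span_induction with
    | mem x hx => rcases hx with ⟨j, rfl⟩; exact hqorth j
    | zero => simp
    | add x y _ _ hx hy => rw [inner_add_left, hx, hy]; ring
    | smul c x _ hx => rw [inner_smul_left]; simp [hx]
  -- decompose q over span(insert ψp (range ψ)) = V
  have hqmem : q ∈ Submodule.span ℝ (insert ψp (Set.range ψ)) := by rw [hspan2]; exact hqV
  rw [Submodule.span_insert] at hqmem
  rcases Submodule.mem_sup.mp hqmem with ⟨y, hy, w, hwW, hqsum⟩
  rcases Submodule.mem_span_singleton.mp hy with ⟨c, rfl⟩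
  have hwW' : w ∈ W := hwW
  -- show w = 0 using positive-definiteness
  have hw0 : w = 0 := by
    have h1 : ⟪w, K q⟫ = 0 := hqW w hwW'
    have h2 : ⟪w, K ψp⟫ = 0 := horthW w hwW'
    have h3 : ⟪w, K w⟫ = 0 := by
      have : ⟪w, K q⟫ = c * ⟪w, K ψp⟫ + ⟪w, K w⟫ := by
        rw [← hqsum]
        simp [map_add, map_smul, inner_add_right, inner_smul_right, smul_smul]
      rw [h1, h2] at this
      linarith
    by_contra hw
    rcases lt_or_eq_of_le (by simpa [real_inner_comm] using hK_pos w) with h | h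
    · linarith
    · exact hw (kdef K hK_sa hK_pos hK_inj w h.symm)
  have hq : q = c • ψp := by rw [← hqsum, hw0, add_zero]
  have hc2 : c * c = 1 := by
    have : ⟪q, K q⟫ = c * c * ⟪ψp, K ψp⟫ := by
      rw [hq, map_smul, inner_smul_left, inner_smul_right]
      simp only [RCLike.conj_to_real]; ring
    rw [hqnorm, hnorm, mul_one] at this
    linarith
  rcases mul_self_eq_one_iff.mp hc2 with h1 | h1
  · left; rw [hq, h1, one_smul]
  · right; rw [hq, h1, neg_smul, one_smul]
end

section
/- (Theorem 2.) Assume all eigenvalues of K are strictly positive (equivalently, K is injective). Then every b ∈ H lies in the closed linear span of {K^j(b) : j ≥ 1}; that is, b can be approximated in the norm of H arbitrarily well by finite linear combinations Σ_{j=1}^m w_j K^j(b) with real coefficients w_j. -/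
open scoped RealInnerProductSpace

/-- (Theorem 2.) `K` is a positive semidefinite, self-adjoint, trace-class operator on a
separable real Hilbert space `H`, with eigenvalues `θ 0 ≥ θ 1 ≥ … ≥ 0` and corresponding
complete orthonormal system of eigenvectors `φ`.  If all eigenvalues of `K` are strictly
positive (equivalently, `K` is injective), then every `b ∈ H` lies in the closed linear
span of `{K^j(b) : j ≥ 1}`; that is, `b` can be approximated in norm arbitrarily well by
finite linear combinations `∑_{j=1}^m w_j K^j(b)`. -/
theorem stmt_3
    {H : Type*} [NormedAddCommGroup H] [InnerProductSpace ℝ H] [CompleteSpace H]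
    [TopologicalSpace.SeparableSpace H]
    (K : H →L[ℝ] H) (hK_sa : IsSelfAdjoint K) (hK_pos : ∀ x : H, 0 ≤ ⟪K x, x⟫)
    (θ : ℕ → ℝ) (φ : ℕ → H)
    (hφ : Orthonormal ℝ φ)
    (hφ_complete : (Submodule.span ℝ (Set.range φ)).topologicalClosure = ⊤)
    (hθ_anti : Antitone θ)
    (hθ_summable : Summable θ)
    (h_eig : ∀ k, K (φ k) = θ k • φ k)
    (hθ_pos : ∀ k, 0 < θ k)
    (b : H) :
    b ∈ (Submodule.span ℝ (Set.range fun j : ℕ => (K ^ (j + 1)) b)).topologicalClosure ∧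
      ∀ ε > (0 : ℝ), ∃ (m : ℕ) (w : Fin m → ℝ),
        ‖b - ∑ j : Fin m, w j • (K ^ ((j : ℕ) + 1)) b‖ < ε := by
  have hsym : ∀ x y : H, ⟪K x, y⟫ = ⟪x, K y⟫ := fun x y => hK_sa.isSymmetric x y
  -- K is injective
  have hinj : ∀ x : H, K x = 0 → x = 0 := by
    intro x hx
    have hperp : x ∈ (Submodule.span ℝ (Set.range φ))ᗮ := by
      rw [Submodule.mem_orthogonal']
      intro u hu
      induction hu using Submodule.span_induction with
      | mem u hu =>
          obtain ⟨k, rfl⟩ := hu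
          have h1 : ⟪x, K (φ k)⟫ = 0 := by rw [← hsym, hx, inner_zero_left]
          rw [h_eig k, real_inner_smul_right] at h1
          exact (mul_eq_zero.mp h1).resolve_left (ne_of_gt (hθ_pos k))
      | zero => simp
      | add u v _ _ hu hv => rw [inner_add_right, hu, hv, add_zero]
      | smul a u _ hu => rw [real_inner_smul_right, hu, mul_zero]
    rw [Submodule.topologicalClosure_eq_top_iff.mp hφ_complete] at hperp
    simpa using hperp
  set S : Set H := Set.range fun j : ℕ => (K ^ (j + 1)) b with hS
  set M0 : Submodule ℝ H := Submodule.span ℝ S with hM0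
  set M : Submodule ℝ H := M0.topologicalClosure with hM
  -- M0 is K-invariant
  have hKspan : ∀ x ∈ M0, K x ∈ M0 := by
    intro x hx
    induction hx using Submodule.span_induction with
    | mem u hu =>
        obtain ⟨j, rfl⟩ := hu
        apply Submodule.subset_span
        refine ⟨j + 1, ?_⟩
        simp [pow_succ', ContinuousLinearMap.mul_apply]
    | zero => simp
    | add u v _ _ hu hv => rw [map_add]; exact M0.add_mem hu hv
    | smul a u _ hu => rw [map_smul]; exact M0.smul_mem a hu
  -- M is K-invariant
  have hKM : ∀ x ∈ M, K x ∈ M := by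
    intro x hx
    have hx' : x ∈ closure (M0 : Set H) := hx
    have : K x ∈ closure (M0 : Set H) :=
      map_mem_closure K.continuous hx' (fun y hy => hKspan y hy)
    exact this
  have hKb : K b ∈ M := by
    apply Submodule.le_topologicalClosure M0
    apply Submodule.subset_span
    exact ⟨0, by simp⟩
  -- project b onto M
  haveI : CompleteSpace M := M0.isClosed_topologicalClosure.completeSpace_coe
  set u : H := (M.orthogonalProjectionOnto b : H) with hu
  have humem : u ∈ M := (M.orthogonalProjectionOnto b).2
  have hv : b - u ∈ Mᗮ := M.sub_starProjection_mem_orthogonal b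
  have hKv_perp : K (b - u) ∈ Mᗮ := by
    rw [Submodule.mem_orthogonal]
    intro y hy
    rw [← hsym]
    exact (Submodule.mem_orthogonal M (b - u)).mp hv (K y) (hKM y hy)
  have hKv_mem : K (b - u) ∈ M := by
    rw [map_sub]
    exact M.sub_mem hKb (hKM u humem)
  have hKv0 : K (b - u) = 0 := by
    have := (Submodule.mem_orthogonal M (K (b - u))).mp hKv_perp (K (b - u)) hKv_mem
    exact inner_self_eq_zero.mp this
  have hb : b ∈ M := by
    have : b - u = 0 := hinj _ hKv0
    have hbu : b = u := by rwa [sub_eq_zero] at this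
    rw [hbu]; exact humem
  refine ⟨hb, ?_⟩
  intro ε hε
  have hb' : b ∈ closure (M0 : Set H) := hb
  obtain ⟨y, hyM0, hyd⟩ := Metric.mem_closure_iff.mp hb' ε hε
  obtain ⟨c, hc⟩ := Finsupp.mem_span_range_iff_exists_finsupp.mp hyM0
  set m : ℕ := c.support.sup id + 1 with hm
  refine ⟨m, fun j => c j, ?_⟩
  have hsupp : c.support ⊆ Finset.range m := by
    intro i hi
    exact Finset.mem_range.mpr (Nat.lt_succ_of_le (Finset.le_sup (f := id) hi))
  have hsum : ∑ j : Fin m, c j • (K ^ ((j : ℕ) + 1)) b = y := by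
    rw [Fin.sum_univ_eq_sum_range (fun j => c j • (K ^ (j + 1)) b) m]
    rw [← hc]
    exact (Finsupp.sum_of_support_subset c hsupp (fun i a => a • (K ^ (i + 1)) b)
      (fun i _ => zero_smul ℝ _)).symm
  rw [hsum]
  rw [dist_eq_norm] at hyd
  exact hyd
end

section
/- (Theorem 3, deterministic core: expansion (5.10)–(5.12) of the iterated estimators.) Let n ≥ 1, let ξ, η be self-adjoint Hilbert–Schmidt operators on H, let ξ₀, η₀ ∈ H, and set K̂ = K + n^{-1/2} ξ + n^{-1} η (an operator on H), ĝ₁ = K(b) + n^{-1/2} ξ₀ + n^{-1} η₀, and ĝ_{j+1} = K̂(ĝ_j) for j ≥ 1. Define ζ_j = ξ(K^j(b)), ξ_j = K^{j−1}(ξ₀) + Σ_{k=0}^{j−2} K^k(ζ_{j−k−1}), and η_j := n(ĝ_j − K^j(b)) − n^{1/2} ξ_j. Then for every j ≥ 1, ĝ_j = K^j(b) + n^{-1/2} ξ_j + n^{-1} η_j and ‖η_j‖ ≤ R₁^{j−1} ‖η₀‖ + R₂ Σ_{k=1}^{j−1} R₁^{j−k−1} (‖K^k(b)‖ + ⫼K^{k−1}⫼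 ‖ξ₀‖) + R₂ ⫼ξ⫼ Σ_{k=1}^{j−1} R₁^{j−k−1} Σ_{ℓ=0}^{k−2} ⫼K^ℓ⫼ ‖K^{k−ℓ−1}(b)‖, where R₁ = ⫼K⫼ + n^{-1/2} ⫼ξ⫼ + n^{-1} ⫼η⫼ and R₂ = ⫼ξ⫼ + ⫼η⫼. -/
open scoped RealInnerProductSpace

lemma aux_op_le {H : Type*} [NormedAddCommGroup H] [InnerProductSpace ℝ H] [CompleteSpace H]
    {ι : Type*} (e : HilbertBasis ι ℝ H) (T : H →L[ℝ] H)
    (hT : Summable fun i : ι => ‖T (e i)‖ ^ 2) (x : H) :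
    ‖T x‖ ≤ Real.sqrt (∑' i : ι, ‖T (e i)‖ ^ 2) * ‖x‖ := by
  have hrepr_sq : ∀ i : ι, ‖e.repr x i‖ ^ 2 = (⟪(e : ι → H) i, x⟫ : ℝ) ^ 2 := by
    intro i; rw [e.repr_apply_apply]; simp [sq_abs, Real.norm_eq_abs]
  have hx2 : HasSum (fun i : ι => ‖e.repr x i‖ ^ 2) (‖x‖ ^ 2) := by
    have h := e.hasSum_inner_mul_inner x x
    simp only [real_inner_self_eq_norm_sq] at h
    convert h using 2 with i
    case e'_5 => rw [hrepr_sq i, sq, real_inner_comm]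
    rfl
  have hrepr : HasSum (fun i => e.repr x i • (e : ι → H) i) x := e.hasSum_repr x
  have hTx : HasSum (fun i => e.repr x i • T ((e : ι → H) i)) (T x) := by
    simpa using hrepr.mapL T
  have hprod : Summable fun i : ι => ‖e.repr x i‖ * ‖T ((e : ι → H) i)‖ := by
    apply Summable.of_nonneg_of_le (fun i => by positivity)
      (fun i => ?_) ((hx2.summable.add hT).div_const 2)
    nlinarith [sq_nonneg (‖e.repr x i‖ - ‖T ((e : ι → H) i)‖)]
  have h1 : ‖T x‖ ≤ ∑' i, ‖e.repr x i‖ * ‖T ((e : ι → H) i)‖ := by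
    have := norm_tsum_le_tsum_norm (f := fun i => e.repr x i • T ((e : ι → H) i))
      (by simpa [norm_smul] using hprod)
    rw [hTx.tsum_eq] at this
    simpa [norm_smul] using this
  have h2 : ∑' i, ‖e.repr x i‖ * ‖T ((e : ι → H) i)‖ ≤
      Real.sqrt (‖x‖ ^ 2) * Real.sqrt (∑' i : ι, ‖T (e i)‖ ^ 2) := by
    apply Summable.tsum_le_of_sum_le hprod
    intro s
    refine (Real.sum_mul_le_sqrt_mul_sqrt s _ _).trans ?_
    gcongr
    · exact (Summable.sum_le_tsum s (fun i _ => by positivity) hx2.summable).trans_eq hx2.tsum_eq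
    · exact Summable.sum_le_tsum s (fun i _ => by positivity) hT
  calc ‖T x‖ ≤ _ := h1
    _ ≤ _ := h2
    _ = _ := by rw [Real.sqrt_sq (norm_nonneg x), mul_comm]

private lemma norm_add₆_le {H : Type*} [NormedAddCommGroup H] (a b c d f g : H) :
    ‖a + b + c + d + f + g‖ ≤ ‖a‖ + ‖b‖ + ‖c‖ + ‖d‖ + ‖f‖ + ‖g‖ :=
  (norm_add_le _ _).trans (add_le_add ((norm_add_le _ _).trans (add_le_add
    ((norm_add_le _ _).trans (add_le_add ((norm_add_le _ _).trans (add_le_add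
      (norm_add_le _ _) le_rfl)) le_rfl)) le_rfl)) le_rfl)

set_option maxHeartbeats 1600000 in
/-- (Theorem 3, deterministic core: expansion (5.10)–(5.12) of the iterated estimators.)
`K` is a positive semidefinite, self-adjoint, trace-class operator on a separable real
Hilbert space `H` (with Hilbert basis `e`, used to express the Hilbert–Schmidt norm
`hs T = (∑_i ‖T (e i)‖²)^{1/2}`), `b ∈ H`, `ξ, η` are self-adjoint Hilbert–Schmidt
operators, `ξ₀, η₀ ∈ H`, and `K̂ = K + n^{-1/2} ξ + n^{-1} η`,
`ĝ₁ = K b + n^{-1/2} ξ₀ + n^{-1} η₀`, `ĝ_{j+1} = K̂ ĝ_j`.  With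
`ζ_j = ξ (K^j b)`, `ξ_j = K^{j-1} ξ₀ + ∑_{k=0}^{j-2} K^k ζ_{j-k-1}` and
`η_j = n (ĝ_j − K^j b) − n^{1/2} ξ_j`, for every `j ≥ 1` one has
`ĝ_j = K^j b + n^{-1/2} ξ_j + n^{-1} η_j` together with the bound (5.12) on `‖η_j‖`,
where `R₁ = ⫼K⫼ + n^{-1/2} ⫼ξ⫼ + n^{-1} ⫼η⫼`, `R₂ = ⫼ξ⫼ + ⫼η⫼`, and `hsK m = ⫼K^m⫼`
with the convention `hsK 0 = 1`. -/
theorem stmt_10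
    {H : Type*} [NormedAddCommGroup H] [InnerProductSpace ℝ H] [CompleteSpace H]
    {ι : Type*} (e : HilbertBasis ι ℝ H)
    (K ξ η : H →L[ℝ] H)
    (hK_sa : IsSelfAdjoint K) (hK_pos : ∀ x : H, 0 ≤ ⟪K x, x⟫)
    (hξ_sa : IsSelfAdjoint ξ) (hη_sa : IsSelfAdjoint η)
    (hs : (H →L[ℝ] H) → ℝ)
    (h_hs : ∀ T : H →L[ℝ] H, hs T = Real.sqrt (∑' i : ι, ‖T (e i)‖ ^ 2))
    (hK_HS : Summable fun i : ι => ‖K (e i)‖ ^ 2)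
    (hξ_HS : Summable fun i : ι => ‖ξ (e i)‖ ^ 2)
    (hη_HS : Summable fun i : ι => ‖η (e i)‖ ^ 2)
    (b ξ₀ η₀ : H) (n : ℕ) (hn : 1 ≤ n)
    (Khat : H →L[ℝ] H)
    (hKhat : Khat = K + (Real.sqrt n)⁻¹ • ξ + (n : ℝ)⁻¹ • η)
    (ghat : ℕ → H)
    (hghat1 : ghat 1 = K b + (Real.sqrt n)⁻¹ • ξ₀ + (n : ℝ)⁻¹ • η₀)
    (hghat_rec : ∀ j, 1 ≤ j → ghat (j + 1) = Khat (ghat j))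
    (ζ : ℕ → H) (hζ : ∀ j, ζ j = ξ ((K ^ j) b))
    (ξv : ℕ → H)
    (hξv : ∀ j, 1 ≤ j → ξv j = (K ^ (j - 1)) ξ₀ +
      ∑ k ∈ Finset.range (j - 1), (K ^ k) (ζ (j - k - 1)))
    (ηv : ℕ → H)
    (hηv : ∀ j, ηv j = (n : ℝ) • (ghat j - (K ^ j) b) - Real.sqrt n • ξv j)
    (R₁ R₂ : ℝ)
    (hR₁ : R₁ = hs K + (Real.sqrt n)⁻¹ * hs ξ + (n : ℝ)⁻¹ * hs η)
    (hR₂ : R₂ = hs ξ + hs η)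
    (hsK : ℕ → ℝ)
    (h_hsK0 : hsK 0 = 1) (h_hsKm : ∀ m, 1 ≤ m → hsK m = hs (K ^ m)) :
    ∀ j, 1 ≤ j →
      ghat j = (K ^ j) b + (Real.sqrt n)⁻¹ • ξv j + (n : ℝ)⁻¹ • ηv j ∧
      ‖ηv j‖ ≤ R₁ ^ (j - 1) * ‖η₀‖
        + R₂ * ∑ k ∈ Finset.Icc 1 (j - 1),
            R₁ ^ (j - k - 1) * (‖(K ^ k) b‖ + hsK (k - 1) * ‖ξ₀‖)
        + R₂ * hs ξ * ∑ k ∈ Finset.Icc 1 (j - 1),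
            R₁ ^ (j - k - 1) *
              ∑ l ∈ Finset.range (k - 1), hsK l * ‖(K ^ (k - l - 1)) b‖ := by
  -- numeric facts
  have hn0 : (0:ℝ) < n := by exact_mod_cast hn
  have hn1 : (1:ℝ) ≤ n := by exact_mod_cast hn
  set r : ℝ := Real.sqrt n with hrdef
  have hr0 : (0:ℝ) < r := Real.sqrt_pos.2 hn0
  have hr1 : (1:ℝ) ≤ r := by
    rw [hrdef, show (1:ℝ) = Real.sqrt 1 by simp]
    exact Real.sqrt_le_sqrt hn1
  have hsq : r * r = (n:ℝ) := Real.mul_self_sqrt hn0.le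
  have hrne : r ≠ 0 := ne_of_gt hr0
  have hrinv1 : r⁻¹ ≤ 1 := by
    rw [inv_le_one_iff₀]; right; exact hr1
  -- hs facts
  have hs_nonneg : ∀ T, 0 ≤ hs T := fun T => by rw [h_hs]; positivity
  have opK : ∀ x, ‖K x‖ ≤ hs K * ‖x‖ := fun x => by
    rw [h_hs]; exact aux_op_le e K hK_HS x
  have opξ : ∀ x, ‖ξ x‖ ≤ hs ξ * ‖x‖ := fun x => by
    rw [h_hs]; exact aux_op_le e ξ hξ_HS x
  have opη : ∀ x, ‖η x‖ ≤ hs η * ‖x‖ := fun x => by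
    rw [h_hs]; exact aux_op_le e η hη_HS x
  have hKm_HS : ∀ m, 1 ≤ m → Summable fun i : ι => ‖(K ^ m) (e i)‖ ^ 2 := by
    intro m hm
    obtain ⟨p, rfl⟩ := Nat.exists_eq_add_of_le hm
    apply Summable.of_nonneg_of_le (fun i => by positivity) (fun i => ?_)
      (hK_HS.mul_left (‖K ^ p‖ ^ 2))
    have h1 : (K ^ (1 + p)) (e i) = (K ^ p) (K (e i)) := by
      rw [add_comm, pow_succ]; rfl
    rw [h1, ← mul_pow]
    have := (K ^ p).le_opNorm (K (e i))
    have h2 : (0:ℝ) ≤ ‖(K ^ p) (K (e i))‖ := norm_nonneg _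
    nlinarith
  have opKm : ∀ m (x : H), ‖(K ^ m) x‖ ≤ hsK m * ‖x‖ := by
    intro m x
    rcases Nat.eq_zero_or_pos m with h | h
    · subst h; simp [h_hsK0]
    · rw [h_hsKm m h, h_hs]; exact aux_op_le e _ (hKm_HS m h) x
  have hsK_nonneg : ∀ m, 0 ≤ hsK m := by
    intro m
    rcases Nat.eq_zero_or_pos m with h | h
    · subst h; rw [h_hsK0]; norm_num
    · rw [h_hsKm m h]; exact hs_nonneg _
  have hR1_nonneg : 0 ≤ R₁ := by
    rw [hR₁]
    have := hs_nonneg K; have := hs_nonneg ξ; have := hs_nonneg η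
    positivity
  have hR2_nonneg : 0 ≤ R₂ := by
    rw [hR₂]; have := hs_nonneg ξ; have := hs_nonneg η; linarith
  -- part 1 (holds for all j by pure algebra)
  have part1 : ∀ j, ghat j = (K ^ j) b + r⁻¹ • ξv j + (n : ℝ)⁻¹ • ηv j := by
    intro j
    rw [hηv j, ← hsq]
    match_scalars <;> field_simp <;> ring
  -- recursion for ξv
  have hξv_succ : ∀ m : ℕ, ξv (m + 2) = K (ξv (m + 1)) + ξ ((K ^ (m + 1)) b) := by
    intro m
    rw [hξv (m + 2) (by omega), hξv (m + 1) (by omega)]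
    simp only [show m + 2 - 1 = m + 1 from rfl, show m + 1 - 1 = m from rfl]
    rw [Finset.sum_range_succ']
    have h0 : (K ^ 0) (ζ (m + 2 - 0 - 1)) = ξ ((K ^ (m + 1)) b) := by
      simp [hζ]
    rw [h0, map_add]
    have hp : K ((K ^ m) ξ₀) = (K ^ (m + 1)) ξ₀ := by
      rw [pow_succ']; rfl
    rw [hp, map_sum]
    have hS : ∑ k ∈ Finset.range m, (K ^ (k + 1)) (ζ (m + 2 - (k + 1) - 1))
        = ∑ k ∈ Finset.range m, K ((K ^ k) (ζ (m + 1 - k - 1))) := by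
      apply Finset.sum_congr rfl
      intro k hk
      have h1 : m + 2 - (k + 1) - 1 = m + 1 - k - 1 := by omega
      rw [h1, pow_succ']; rfl
    rw [hS]
    abel
  -- recursion for ηv
  have hηv_succ : ∀ m : ℕ, ηv (m + 2) = K (ηv (m + 1)) + r⁻¹ • ξ (ηv (m + 1))
      + (n : ℝ)⁻¹ • η (ηv (m + 1)) + ξ (ξv (m + 1)) + r⁻¹ • η (ξv (m + 1))
      + η ((K ^ (m + 1)) b) := by
    intro m
    have hg := part1 (m + 1)
    have hp : (K ^ (m + 2)) b = K ((K ^ (m + 1)) b) := by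
      rw [pow_succ']; rfl
    rw [hηv (m + 2), hghat_rec (m + 1) (by omega), hKhat, hg, hξv_succ m, hp]
    simp only [ContinuousLinearMap.add_apply, ContinuousLinearMap.coe_smul',
      Pi.smul_apply, map_add, map_smul]
    rw [← hsq]
    match_scalars <;> field_simp <;> ring
  -- bound on ξv
  have hXbound : ∀ m : ℕ, ‖ξv (m + 1)‖ ≤ hsK m * ‖ξ₀‖
      + hs ξ * ∑ l ∈ Finset.range m, hsK l * ‖(K ^ (m - l)) b‖ := by
    intro m
    rw [hξv (m + 1) (by omega)]
    simp only [Nat.add_sub_cancel]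
    refine (norm_add_le _ _).trans (add_le_add (opKm m ξ₀) ?_)
    refine (norm_sum_le _ _).trans ?_
    rw [Finset.mul_sum]
    apply Finset.sum_le_sum
    intro k hk
    have hk' : k < m := Finset.mem_range.mp hk
    have h1 : ‖(K ^ k) (ζ (m + 1 - k - 1))‖ ≤ hsK k * ‖ζ (m - k)‖ := by
      have : m + 1 - k - 1 = m - k := by omega
      rw [this]; exact opKm k _
    refine h1.trans ?_
    rw [hζ]
    calc hsK k * ‖ξ ((K ^ (m - k)) b)‖ ≤ hsK k * (hs ξ * ‖(K ^ (m - k)) b‖) := by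
          exact mul_le_mul_of_nonneg_left (opξ _) (hsK_nonneg k)
      _ = hs ξ * (hsK k * ‖(K ^ (m - k)) b‖) := by ring
  -- one-step norm bound
  have step : ∀ m : ℕ, ‖ηv (m + 2)‖ ≤ R₁ * ‖ηv (m + 1)‖
      + R₂ * (‖(K ^ (m + 1)) b‖ + hsK m * ‖ξ₀‖)
      + R₂ * hs ξ * ∑ l ∈ Finset.range m, hsK l * ‖(K ^ (m - l)) b‖ := by
    intro m
    rw [hηv_succ m]
    refine (norm_add₆_le _ _ _ _ _ _).trans ?_
    have e1 := opK (ηv (m + 1))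
    have e2 := opξ (ηv (m + 1))
    have e3 := opη (ηv (m + 1))
    have e4 := opξ (ξv (m + 1))
    have e5 := opη (ξv (m + 1))
    have e6 := opη ((K ^ (m + 1)) b)
    have hX := hXbound m
    have hXnn : (0:ℝ) ≤ ‖ξv (m + 1)‖ := norm_nonneg _
    have hYnn : (0:ℝ) ≤ ‖ηv (m + 1)‖ := norm_nonneg _
    have hAnn : (0:ℝ) ≤ ‖(K ^ (m + 1)) b‖ := norm_nonneg _
    have hSnn : (0:ℝ) ≤ ∑ l ∈ Finset.range m, hsK l * ‖(K ^ (m - l)) b‖ :=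
      Finset.sum_nonneg fun l _ => mul_nonneg (hsK_nonneg l) (norm_nonneg _)
    have hninv : (0:ℝ) < (n:ℝ)⁻¹ := by positivity
    have hninv1 : (n:ℝ)⁻¹ ≤ 1 := by
      rw [inv_le_one_iff₀]; right; exact hn1
    have hrinv0 : (0:ℝ) ≤ r⁻¹ := by positivity
    have hsξnn := hs_nonneg ξ
    have hsηnn := hs_nonneg η
    have hsKnn := hs_nonneg K
    have hξ₀nn : (0:ℝ) ≤ ‖ξ₀‖ := norm_nonneg _
    simp only [norm_smul, Real.norm_eq_abs, abs_of_nonneg hrinv0, abs_of_nonneg hninv.le]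
    have c1 : ‖K (ηv (m + 1))‖ + r⁻¹ * ‖ξ (ηv (m + 1))‖ + (n:ℝ)⁻¹ * ‖η (ηv (m + 1))‖
        ≤ R₁ * ‖ηv (m + 1)‖ := by
      have expand : R₁ * ‖ηv (m + 1)‖ = hs K * ‖ηv (m + 1)‖
          + r⁻¹ * (hs ξ * ‖ηv (m + 1)‖) + (n:ℝ)⁻¹ * (hs η * ‖ηv (m + 1)‖) := by
        rw [hR₁]; ring
      have b2 := mul_le_mul_of_nonneg_left e2 hrinv0
      have b3 := mul_le_mul_of_nonneg_left e3 hninv.le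
      linarith
    have c2 : ‖ξ (ξv (m + 1))‖ + r⁻¹ * ‖η (ξv (m + 1))‖ ≤ R₂ * ‖ξv (m + 1)‖ := by
      have expand : R₂ * ‖ξv (m + 1)‖ = hs ξ * ‖ξv (m + 1)‖ + 1 * (hs η * ‖ξv (m + 1)‖) := by
        rw [hR₂]; ring
      have b5 := mul_le_mul_of_nonneg_left e5 hrinv0
      have b6 := mul_le_mul_of_nonneg_right hrinv1 (mul_nonneg hsηnn hXnn)
      linarith
    have c3 : ‖η ((K ^ (m + 1)) b)‖ ≤ R₂ * ‖(K ^ (m + 1)) b‖ := by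
      refine e6.trans (mul_le_mul_of_nonneg_right ?_ hAnn)
      rw [hR₂]; linarith
    have c4 : R₂ * ‖ξv (m + 1)‖ ≤ R₂ * (hsK m * ‖ξ₀‖)
        + R₂ * hs ξ * ∑ l ∈ Finset.range m, hsK l * ‖(K ^ (m - l)) b‖ := by
      calc R₂ * ‖ξv (m + 1)‖
          ≤ R₂ * (hsK m * ‖ξ₀‖ + hs ξ * ∑ l ∈ Finset.range m, hsK l * ‖(K ^ (m - l)) b‖) :=
            mul_le_mul_of_nonneg_left hX hR2_nonneg
        _ = _ := by ring
    have expand5 : R₂ * (‖(K ^ (m + 1)) b‖ + hsK m * ‖ξ₀‖)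
        = R₂ * ‖(K ^ (m + 1)) b‖ + R₂ * (hsK m * ‖ξ₀‖) := by ring
    linarith
  -- main induction
  have hη1 : ηv 1 = η₀ := by
    rw [hηv 1, hghat1, hξv 1 le_rfl]
    simp only [pow_one, Nat.sub_self, pow_zero, Finset.range_zero, Finset.sum_empty,
      ContinuousLinearMap.one_apply, add_zero]
    rw [← hsq]
    match_scalars <;> field_simp <;> ring
  have hmain : ∀ m : ℕ, ‖ηv (m + 1)‖ ≤ R₁ ^ m * ‖η₀‖
      + R₂ * ∑ k ∈ Finset.Icc 1 m, R₁ ^ (m - k) * (‖(K ^ k) b‖ + hsK (k - 1) * ‖ξ₀‖)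
      + R₂ * hs ξ * ∑ k ∈ Finset.Icc 1 m, R₁ ^ (m - k) *
          ∑ l ∈ Finset.range (k - 1), hsK l * ‖(K ^ (k - l - 1)) b‖ := by
    intro m
    induction m with
    | zero => simp [hη1]
    | succ m ih =>
      have hsplit1 : ∑ k ∈ Finset.Icc 1 (m + 1), R₁ ^ (m + 1 - k) *
            (‖(K ^ k) b‖ + hsK (k - 1) * ‖ξ₀‖)
          = (∑ k ∈ Finset.Icc 1 m, R₁ ^ (m + 1 - k) * (‖(K ^ k) b‖ + hsK (k - 1) * ‖ξ₀‖))
            + (‖(K ^ (m + 1)) b‖ + hsK m * ‖ξ₀‖) := by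
        rw [Finset.sum_Icc_succ_top (by omega)]
        simp
      have hsplit2 : ∑ k ∈ Finset.Icc 1 (m + 1), R₁ ^ (m + 1 - k) *
            ∑ l ∈ Finset.range (k - 1), hsK l * ‖(K ^ (k - l - 1)) b‖
          = (∑ k ∈ Finset.Icc 1 m, R₁ ^ (m + 1 - k) *
              ∑ l ∈ Finset.range (k - 1), hsK l * ‖(K ^ (k - l - 1)) b‖)
            + ∑ l ∈ Finset.range m, hsK l * ‖(K ^ (m - l)) b‖ := by
        rw [Finset.sum_Icc_succ_top (by omega)]
        simp only [Nat.add_sub_cancel, Nat.sub_self, pow_zero, one_mul]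
        congr 1
        apply Finset.sum_congr rfl
        intro l hl
        have h1 : m + 1 - l - 1 = m - l := by omega
        rw [h1]
      have hpow1 : ∀ k ∈ Finset.Icc 1 m, R₁ ^ (m + 1 - k) *
            (‖(K ^ k) b‖ + hsK (k - 1) * ‖ξ₀‖)
          = R₁ * (R₁ ^ (m - k) * (‖(K ^ k) b‖ + hsK (k - 1) * ‖ξ₀‖)) := by
        intro k hk
        have hk' : k ≤ m := (Finset.mem_Icc.mp hk).2
        rw [show m + 1 - k = (m - k) + 1 by omega, pow_succ]
        ring
      have hpow2 : ∀ k ∈ Finset.Icc 1 m, R₁ ^ (m + 1 - k) *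
            ∑ l ∈ Finset.range (k - 1), hsK l * ‖(K ^ (k - l - 1)) b‖
          = R₁ * (R₁ ^ (m - k) * ∑ l ∈ Finset.range (k - 1), hsK l * ‖(K ^ (k - l - 1)) b‖) := by
        intro k hk
        have hk' : k ≤ m := (Finset.mem_Icc.mp hk).2
        rw [show m + 1 - k = (m - k) + 1 by omega, pow_succ]
        ring
      rw [hsplit1, hsplit2, Finset.sum_congr rfl hpow1, Finset.sum_congr rfl hpow2,
        ← Finset.mul_sum, ← Finset.mul_sum]
      have hstep := step m
      have hIH := mul_le_mul_of_nonneg_left ih hR1_nonneg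
      calc ‖ηv (m + 2)‖ ≤ R₁ * ‖ηv (m + 1)‖
            + R₂ * (‖(K ^ (m + 1)) b‖ + hsK m * ‖ξ₀‖)
            + R₂ * hs ξ * ∑ l ∈ Finset.range m, hsK l * ‖(K ^ (m - l)) b‖ := hstep
        _ ≤ R₁ * (R₁ ^ m * ‖η₀‖
              + R₂ * ∑ k ∈ Finset.Icc 1 m, R₁ ^ (m - k) * (‖(K ^ k) b‖ + hsK (k - 1) * ‖ξ₀‖)
              + R₂ * hs ξ * ∑ k ∈ Finset.Icc 1 m, R₁ ^ (m - k) *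
                  ∑ l ∈ Finset.range (k - 1), hsK l * ‖(K ^ (k - l - 1)) b‖)
            + R₂ * (‖(K ^ (m + 1)) b‖ + hsK m * ‖ξ₀‖)
            + R₂ * hs ξ * ∑ l ∈ Finset.range m, hsK l * ‖(K ^ (m - l)) b‖ := by
              gcongr
        _ = _ := by rw [pow_succ]; ring
  intro j hj
  obtain ⟨m, rfl⟩ : ∃ m, j = m + 1 := ⟨j - 1, by omega⟩
  refine ⟨part1 _, ?_⟩
  have e1 : m + 1 - 1 = m := rfl
  rw [e1]
  have hc1 : ∀ k ∈ Finset.Icc 1 m, R₁ ^ (m + 1 - k - 1) * (‖(K ^ k) b‖ + hsK (k - 1) * ‖ξ₀‖)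
      = R₁ ^ (m - k) * (‖(K ^ k) b‖ + hsK (k - 1) * ‖ξ₀‖) := by
    intro k hk; congr 2; omega
  have hc2 : ∀ k ∈ Finset.Icc 1 m, R₁ ^ (m + 1 - k - 1) *
        ∑ l ∈ Finset.range (k - 1), hsK l * ‖(K ^ (k - l - 1)) b‖
      = R₁ ^ (m - k) * ∑ l ∈ Finset.range (k - 1), hsK l * ‖(K ^ (k - l - 1)) b‖ := by
    intro k hk; congr 2; omega
  rw [Finset.sum_congr rfl hc1, Finset.sum_congr rfl hc2]
  exact hmain m
end
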